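/- Let z₁, z₂ ∈ ℂ* with |z₁ + z₂| < |z₁·z₂|. Then all roots of the polynomial P'(u) = 4·conj(z₁·z₂)·u³ - 3·(conj(z₁)+conj(z₂))·u² + (z₁+z₂) lie in the open unit disk. -/

import Mathlib

open Complex ComplexConjugate

theorem deriv_roots_in_unit_disk (z₁ z₂ : ℂ) (hz₁ : z₁ ≠ 0) (hz₂ : z₂ ≠ 0)
    (h : ‖z₁ + z₂‖ < ‖z₁ * z₂‖) :
    ∀ u : ℂ, 4 * conj (z₁ * z₂) * u ^ 3 - 3 * (conj z₁ + conj z₂) * u ^ 2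
        + (z₁ + z₂) = 0 → ‖u‖ < 1 := by
  intro u hu
  by_contra hle
  push_neg at hle
  have heq : 4 * conj (z₁ * z₂) * u ^ 3 = 3 * (conj z₁ + conj z₂) * u ^ 2 - (z₁ + z₂) := by
    linear_combination hu
  have habs := congrArg (fun x : ℂ => ‖x‖) heq
  have hL : ‖4 * conj (z₁ * z₂) * u ^ 3‖
      = 4 * ‖z₁ * z₂‖ * ‖u‖ ^ 3 := by
    simp [norm_mul, norm_pow, Complex.norm_conj]
  have hconj : ‖conj z₁ + conj z₂‖ = ‖z₁ + z₂‖ := by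
    rw [← map_add]
    exact Complex.norm_conj _
  have hR : ‖3 * (conj z₁ + conj z₂) * u ^ 2 - (z₁ + z₂)‖
      ≤ 3 * ‖z₁ + z₂‖ * ‖u‖ ^ 2 + ‖z₁ + z₂‖ := by
    calc ‖3 * (conj z₁ + conj z₂) * u ^ 2 - (z₁ + z₂)‖
        ≤ ‖3 * (conj z₁ + conj z₂) * u ^ 2‖ + ‖z₁ + z₂‖ := by
          exact (norm_sub_le _ _)
      _ = 3 * ‖z₁ + z₂‖ * ‖u‖ ^ 2 + ‖z₁ + z₂‖ := by
          simp [norm_mul, norm_pow, hconj]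
  have key : 4 * ‖z₁ * z₂‖ * ‖u‖ ^ 3
      ≤ 3 * ‖z₁ + z₂‖ * ‖u‖ ^ 2 + ‖z₁ + z₂‖ := by
    rw [← hL]; rw [habs]; exact hR
  have hs : (0:ℝ) ≤ ‖z₁ + z₂‖ := norm_nonneg _
  have hp : (0:ℝ) < ‖z₁ * z₂‖ := lt_of_le_of_lt hs h
  have ha2 : 1 ≤ ‖u‖ ^ 2 := by nlinarith
  have ha2pos : (0:ℝ) < ‖u‖ ^ 2 := lt_of_lt_of_le one_pos ha2
  have ha3 : ‖u‖ ^ 2 ≤ ‖u‖ ^ 3 := by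
    nlinarith [sq_nonneg (‖u‖)]
  nlinarith [mul_lt_mul_of_pos_right h ha2pos,
    mul_le_mul_of_nonneg_left ha3 (le_of_lt hp),
    mul_le_mul_of_nonneg_left ha2 hs]
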